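/- Let α ∈ (0,2). Then sup_{n ≥ 1, x ∈ ℝ} |D^α f_n(x)| ≤ (sup_{u ∈ [0,1]} |ψ''(u)|)/(2−α) + 2/α; in particular this supremum is finite. -/

import Mathlib

open MeasureTheory Real Filter

/-- The fractional Laplacian of order `α`. -/
noncomputable def Dalpha (α : ℝ) (f : ℝ → ℝ) (x : ℝ) : ℝ :=
  ∫ h : ℝ, (f (x + h) - f x - (if |h| ≤ 1 then deriv f x * h else 0)) / |h| ^ (1 + α)

/-- The smoothing polynomial `ψ(u) = 6u⁵ − 15u⁴ + 10u³`. -/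
noncomputable def psi (u : ℝ) : ℝ := 6 * u ^ 5 - 15 * u ^ 4 + 10 * u ^ 3

/-- The cut-off functions `f_n(x) = ψ(min(max(|x| − (n−1), 0), 1))` for `n ≥ 1`, and
`f_0 ≡ 1`. -/
noncomputable def fn : ℕ → ℝ → ℝ
  | 0, _ => 1
  | n + 1, x => psi (min (max (|x| - (n : ℝ)) 0) 1)

namespace S8
open Set
noncomputable def dpsi (u : ℝ) : ℝ := 30 * u ^ 4 - 60 * u ^ 3 + 30 * u ^ 2
noncomputable def ddpsi (u : ℝ) : ℝ := 120 * u ^ 3 - 180 * u ^ 2 + 60 * u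

lemma hasDerivAt_psi (u : ℝ) : HasDerivAt psi (dpsi u) u := by
  have h := (((hasDerivAt_pow 5 u).const_mul (6:ℝ)).sub
    ((hasDerivAt_pow 4 u).const_mul (15:ℝ))).add ((hasDerivAt_pow 3 u).const_mul (10:ℝ))
  convert h using 1
  all_goals first | rfl | (simp [dpsi]; ring)

lemma hasDerivAt_dpsi (u : ℝ) : HasDerivAt dpsi (ddpsi u) u := by
  have h := (((hasDerivAt_pow 4 u).const_mul (30:ℝ)).sub
    ((hasDerivAt_pow 3 u).const_mul (60:ℝ))).add ((hasDerivAt_pow 2 u).const_mul (30:ℝ))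
  convert h using 1
  all_goals first | rfl | (simp [ddpsi]; ring)

lemma deriv_deriv_psi (u : ℝ) : deriv (deriv psi) u = ddpsi u := by
  have h1 : deriv psi = dpsi := funext fun v => (hasDerivAt_psi v).deriv
  rw [h1, (hasDerivAt_dpsi u).deriv]


noncomputable def clamp (t : ℝ) : ℝ := min (max t 0) 1
noncomputable def Fc (t : ℝ) : ℝ := psi (clamp t)
noncomputable def phi (t : ℝ) : ℝ := dpsi (clamp t)

lemma clamp_mem (t : ℝ) : clamp t ∈ Icc (0:ℝ) 1 :=
  ⟨le_min (le_max_right _ _) zero_le_one, min_le_right _ _⟩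

lemma clamp_lip (a b : ℝ) : |clamp a - clamp b| ≤ |a - b| := by
  have h1 : |max a 0 - max b 0| ≤ |a - b| := abs_max_sub_max_le_abs a b 0
  refine le_trans ?_ h1
  have h2 := abs_min_sub_min_le_max (max a 0) 1 (max b 0) 1
  simpa [clamp] using h2

lemma clamp_of_nonpos {t : ℝ} (h : t ≤ 0) : clamp t = 0 := by
  unfold clamp; rw [max_eq_right h, min_eq_left zero_le_one]

lemma clamp_of_one_le {t : ℝ} (h : 1 ≤ t) : clamp t = 1 := by
  unfold clamp; rw [max_eq_left (zero_le_one.trans h), min_eq_right h]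

lemma clamp_of_mem {t : ℝ} (h0 : 0 ≤ t) (h1 : t ≤ 1) : clamp t = t := by
  unfold clamp; rw [max_eq_left h0, min_eq_left h1]

lemma dpsi_zero : dpsi 0 = 0 := by simp [dpsi]
lemma dpsi_one : dpsi 1 = 0 := by norm_num [dpsi]

section Slip
variable {S : ℝ} (hS : ∀ u ∈ Icc (0:ℝ) 1, |ddpsi u| ≤ S)
include hS

lemma S_nonneg : 0 ≤ S :=
  le_trans (abs_nonneg _) (hS 0 ⟨le_refl _, zero_le_one⟩)

lemma phi_lip (a b : ℝ) : |phi a - phi b| ≤ S * |a - b| := by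
  have key : ∀ x ∈ Icc (0:ℝ) 1, ∀ y ∈ Icc (0:ℝ) 1, |dpsi y - dpsi x| ≤ S * |y - x| := by
    intro x hx y hy
    have := (convex_Icc (0:ℝ) 1).norm_image_sub_le_of_norm_hasDerivWithin_le
      (f := dpsi) (f' := ddpsi) (fun z _ => (hasDerivAt_dpsi z).hasDerivWithinAt)
      (fun z hz => hS z hz) hx hy
    simpa [Real.norm_eq_abs] using this
  calc |phi a - phi b| ≤ S * |clamp a - clamp b| := by
        have := key (clamp b) (clamp_mem b) (clamp a) (clamp_mem a)
        simpa [phi] using this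
    _ ≤ S * |a - b| := by
        exact mul_le_mul_of_nonneg_left (clamp_lip a b) (S_nonneg hS)

lemma phi_bound (t : ℝ) : |phi t| ≤ S * max t 0 := by
  rcases le_total t 0 with h | h
  · rw [max_eq_right h]
    simp [phi, clamp_of_nonpos h, dpsi_zero]
  · rw [max_eq_left h]
    have h0 : phi 0 = 0 := by simp [phi, clamp_of_nonpos le_rfl, dpsi_zero]
    have := phi_lip hS t 0
    rw [h0, sub_zero, sub_zero, abs_of_nonneg h] at this
    exact this

end Slip

lemma hasDerivAt_Fc (t : ℝ) : HasDerivAt Fc (phi t) t := by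
  rcases lt_trichotomy t 0 with h | rfl | h
  · have he : Fc =ᶠ[nhds t] (fun _ => psi 0) := by
      filter_upwards [Iio_mem_nhds h] with y hy
      simp [Fc, clamp_of_nonpos (le_of_lt hy)]
    have : HasDerivAt (fun _ : ℝ => psi 0) (phi t) t := by
      have : phi t = 0 := by simp [phi, clamp_of_nonpos (le_of_lt h), dpsi_zero]
      rw [this]; exact hasDerivAt_const _ _
    exact this.congr_of_eventuallyEq he
  · -- t = 0
    have hIic : HasDerivWithinAt Fc (phi 0) (Iic 0) 0 := by
      have : HasDerivWithinAt (fun _ : ℝ => psi 0) (phi 0) (Iic 0) 0 := by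
        have : phi 0 = 0 := by simp [phi, clamp_of_nonpos le_rfl, dpsi_zero]
        rw [this]; exact (hasDerivAt_const _ _).hasDerivWithinAt
      exact this.congr (fun y hy => by simp [Fc, clamp_of_nonpos (mem_Iic.mp hy)])
        (by simp [Fc, clamp_of_nonpos le_rfl])
    have hIci : HasDerivWithinAt Fc (phi 0) (Ici 0) 0 := by
      have hpsi : HasDerivWithinAt psi (phi 0) (Icc (0:ℝ) 1) 0 := by
        have : phi 0 = dpsi 0 := by simp [phi, clamp_of_nonpos le_rfl]
        rw [this]; exact (hasDerivAt_psi 0).hasDerivWithinAt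
      have h2 : HasDerivWithinAt Fc (phi 0) (Icc (0:ℝ) 1) 0 :=
        hpsi.congr (fun y hy => by simp [Fc, clamp_of_mem hy.1 hy.2])
          (by simp [Fc, clamp_of_mem le_rfl zero_le_one])
      apply h2.mono_of_mem_nhdsWithin
      have : Icc (0:ℝ) 1 = Ici 0 ∩ Iic 1 := (Ici_inter_Iic).symm
      rw [this]
      exact inter_mem_nhdsWithin _ (Iic_mem_nhds zero_lt_one)
    have := hIic.union hIci
    rwa [Iic_union_Ici, hasDerivWithinAt_univ] at this
  · rcases lt_trichotomy t 1 with h1 | rfl | h1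
    · have he : Fc =ᶠ[nhds t] psi := by
        filter_upwards [Ioo_mem_nhds h h1] with y hy
        simp [Fc, clamp_of_mem (le_of_lt hy.1) (le_of_lt hy.2)]
      have : phi t = dpsi t := by simp [phi, clamp_of_mem (le_of_lt h) (le_of_lt h1)]
      rw [this]
      exact (hasDerivAt_psi t).congr_of_eventuallyEq he
    · -- t = 1
      have hIci : HasDerivWithinAt Fc (phi 1) (Ici 1) 1 := by
        have : HasDerivWithinAt (fun _ : ℝ => psi 1) (phi 1) (Ici 1) 1 := by
          have : phi 1 = 0 := by simp [phi, clamp_of_one_le le_rfl, dpsi_one]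
          rw [this]; exact (hasDerivAt_const _ _).hasDerivWithinAt
        exact this.congr (fun y hy => by simp [Fc, clamp_of_one_le (mem_Ici.mp hy)])
          (by simp [Fc, clamp_of_one_le le_rfl])
      have hIic : HasDerivWithinAt Fc (phi 1) (Iic 1) 1 := by
        have hpsi : HasDerivWithinAt psi (phi 1) (Icc (0:ℝ) 1) 1 := by
          have : phi 1 = dpsi 1 := by simp [phi, clamp_of_one_le le_rfl]
          rw [this]; exact (hasDerivAt_psi 1).hasDerivWithinAt
        have h2 : HasDerivWithinAt Fc (phi 1) (Icc (0:ℝ) 1) 1 :=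
          hpsi.congr (fun y hy => by simp [Fc, clamp_of_mem hy.1 hy.2])
            (by simp [Fc, clamp_of_mem zero_le_one le_rfl])
        apply h2.mono_of_mem_nhdsWithin
        have : Icc (0:ℝ) 1 = Iic 1 ∩ Ici 0 := by rw [inter_comm, Ici_inter_Iic]
        rw [this]
        exact inter_mem_nhdsWithin _ (Ici_mem_nhds zero_lt_one)
      have := hIic.union hIci
      rwa [Iic_union_Ici, hasDerivWithinAt_univ] at this
    · have he : Fc =ᶠ[nhds t] (fun _ => psi 1) := by
        filter_upwards [Ioi_mem_nhds h1] with y hy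
        simp [Fc, clamp_of_one_le (le_of_lt hy)]
      have : HasDerivAt (fun _ : ℝ => psi 1) (phi t) t := by
        have : phi t = 0 := by simp [phi, clamp_of_one_le (le_of_lt h1), dpsi_one]
        rw [this]; exact hasDerivAt_const _ _
      exact this.congr_of_eventuallyEq he


lemma fn_eq (n : ℕ) (x : ℝ) : fn (n + 1) x = Fc (|x| - n) := rfl

noncomputable def gder (n : ℕ) (x : ℝ) : ℝ := Real.sign x * phi (|x| - n)

lemma phi_neg_n (n : ℕ) : phi (-(n:ℝ)) = 0 := by
  simp [phi, clamp_of_nonpos (neg_nonpos.mpr (Nat.cast_nonneg n)), dpsi_zero]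

lemma gder_of_nonneg (n : ℕ) {x : ℝ} (hx : 0 ≤ x) : gder n x = phi (x - n) := by
  rcases eq_or_lt_of_le hx with rfl | h
  · simp [gder, Real.sign_zero, phi_neg_n]
  · rw [gder, Real.sign_of_pos h, abs_of_pos h, one_mul]

lemma gder_of_nonpos (n : ℕ) {x : ℝ} (hx : x ≤ 0) : gder n x = -phi (-x - n) := by
  rcases eq_or_lt_of_le hx with rfl | h
  · simp [gder, Real.sign_zero, phi_neg_n]
  · rw [gder, Real.sign_of_neg h, abs_of_neg h, neg_one_mul]

section Slip2
variable {S : ℝ} (hS : ∀ u ∈ Icc (0:ℝ) 1, |ddpsi u| ≤ S)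
include hS

lemma phi_bound' (n : ℕ) {t : ℝ} (ht : 0 ≤ t) : |phi (t - n)| ≤ S * t := by
  refine le_trans (phi_bound hS _) ?_
  apply mul_le_mul_of_nonneg_left _ (S_nonneg hS)
  apply max_le _ ht
  linarith [Nat.cast_nonneg (α := ℝ) n]

lemma gder_lip (n : ℕ) (a b : ℝ) : |gder n a - gder n b| ≤ S * |a - b| := by
  rcases le_total 0 a with ha | ha <;> rcases le_total 0 b with hb | hb
  · rw [gder_of_nonneg n ha, gder_of_nonneg n hb]
    have := phi_lip hS (a - n) (b - n)
    simpa using this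
  · -- a ≥ 0 ≥ b
    rw [gder_of_nonneg n ha, gder_of_nonpos n hb]
    have h1 := phi_bound' hS n ha
    have h2 := phi_bound' hS n (neg_nonneg.mpr hb)
    have habs : |a - b| = a - b := abs_of_nonneg (by linarith)
    rw [habs]
    calc |phi (a - n) - -phi (-b - n)| ≤ |phi (a - n)| + |phi (-b - n)| := by
          rw [sub_neg_eq_add]; exact abs_add_le _ _
      _ ≤ S * a + S * (-b) := add_le_add h1 h2
      _ = S * (a - b) := by ring
  · rw [gder_of_nonpos n ha, gder_of_nonneg n hb]
    have h1 := phi_bound' hS n hb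
    have h2 := phi_bound' hS n (neg_nonneg.mpr ha)
    have habs : |a - b| = b - a := by rw [abs_sub_comm]; exact abs_of_nonneg (by linarith)
    rw [habs]
    calc |-phi (-a - n) - phi (b - n)| ≤ |phi (-a - n)| + |phi (b - n)| := by
          have : -phi (-a - ↑n) - phi (b - ↑n) = -(phi (-a - ↑n) + phi (b - ↑n)) := by ring
          rw [this, abs_neg]; exact abs_add_le _ _
      _ ≤ S * (-a) + S * b := add_le_add h2 h1
      _ = S * (b - a) := by ring
  · rw [gder_of_nonpos n ha, gder_of_nonpos n hb]
    have := phi_lip hS (-a - n) (-b - n)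
    have h2 : |(-a - n) - (-b - n)| = |a - b| := by rw [abs_sub_comm]; ring_nf
    rw [h2] at this
    calc |(-phi (-a - n)) - (-phi (-b - n))| = |phi (-a - n) - phi (-b - n)| := by
          rw [← abs_neg]; ring_nf
      _ ≤ S * |a - b| := this

lemma hasDerivAt_fn (n : ℕ) (x : ℝ) : HasDerivAt (fn (n + 1)) (gder n x) x := by
  rcases lt_trichotomy x 0 with h | rfl | h
  · have hF : HasDerivAt (fun y : ℝ => Fc (-y - n)) (-phi (-x - n)) x := by
      have hinner : HasDerivAt (fun y : ℝ => -y - (n:ℝ)) (-1) x := by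
        simpa using ((hasDerivAt_id x).neg.sub_const (n:ℝ))
      have := (hasDerivAt_Fc (-x - n)).comp x hinner
      simpa [mul_comm, Function.comp_def] using this
    have he : fn (n+1) =ᶠ[nhds x] (fun y : ℝ => Fc (-y - n)) := by
      filter_upwards [Iio_mem_nhds h] with y hy
      rw [fn_eq, abs_of_neg (mem_Iio.mp hy)]
    rw [gder_of_nonpos n (le_of_lt h)]
    exact hF.congr_of_eventuallyEq he
  · -- x = 0
    rw [gder_of_nonneg n le_rfl]
    have hphi0 : phi ((0:ℝ) - n) = 0 := by rw [zero_sub]; exact phi_neg_n n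
    rw [hphi0]
    have hkey : ∀ y : ℝ, |fn (n+1) y - fn (n+1) 0| ≤ S * |y| * |y| := by
      intro y
      have hmvt := (convex_Icc (-(n:ℝ)) (|y| - n)).norm_image_sub_le_of_norm_hasDerivWithin_le
        (f := Fc) (f' := phi) (fun z _ => (hasDerivAt_Fc z).hasDerivWithinAt)
        (C := S * |y|) (x := -(n:ℝ)) (y := |y| - (n:ℝ)) ?_ ?_ ?_
      · have h0 : fn (n+1) 0 = Fc (-(n:ℝ)) := by rw [fn_eq]; norm_num
        rw [fn_eq, h0]
        calc |Fc (|y| - n) - Fc (-(n:ℝ))| ≤ S * |y| * ‖(|y| - (n:ℝ)) - (-(n:ℝ))‖ := hmvt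
          _ = S * |y| * |y| := by norm_num
      · intro z hz
        rw [Real.norm_eq_abs]
        refine le_trans (phi_bound hS z) ?_
        apply mul_le_mul_of_nonneg_left _ (S_nonneg hS)
        apply max_le _ (abs_nonneg y)
        have := hz.2
        linarith [Nat.cast_nonneg (α := ℝ) n]
      · exact ⟨le_rfl, by linarith [abs_nonneg y]⟩
      · exact ⟨by linarith [abs_nonneg y], le_rfl⟩
    rw [hasDerivAt_iff_isLittleO, Asymptotics.isLittleO_iff]
    intro c hc
    have hS1 : (0:ℝ) < S + 1 := by linarith [S_nonneg hS]
    have hcd : (0:ℝ) < c / (S + 1) := div_pos hc hS1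
    filter_upwards [Metric.ball_mem_nhds (0:ℝ) hcd] with y hy
    rw [Metric.mem_ball, Real.dist_eq, sub_zero] at hy
    simp only [sub_zero, smul_zero, sub_zero, Real.norm_eq_abs]
    refine le_trans (hkey y) ?_
    have h1 : S * |y| ≤ c := by
      rw [lt_div_iff₀ hS1] at hy
      nlinarith [abs_nonneg y, S_nonneg hS]
    exact mul_le_mul_of_nonneg_right h1 (abs_nonneg y)
  · have hF : HasDerivAt (fun y : ℝ => Fc (y - n)) (phi (x - n)) x := by
      have hinner : HasDerivAt (fun y : ℝ => y - (n:ℝ)) 1 x := (hasDerivAt_id x).sub_const (n:ℝ)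
      have := (hasDerivAt_Fc (x - n)).comp x hinner
      simpa [Function.comp_def] using this
    have he : fn (n+1) =ᶠ[nhds x] (fun y : ℝ => Fc (y - n)) := by
      filter_upwards [Ioi_mem_nhds h] with y hy
      rw [fn_eq, abs_of_pos (mem_Ioi.mp hy)]
    rw [gder_of_nonneg n (le_of_lt h)]
    exact hF.congr_of_eventuallyEq he

end Slip2

lemma taylor {S : ℝ} (hS0 : 0 ≤ S) {f g : ℝ → ℝ} (hd : ∀ x, HasDerivAt f (g x) x)
    (hlip : ∀ a b, |g a - g b| ≤ S * |a - b|) (x h : ℝ) :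
    |f (x + h) - f x - g x * h| ≤ S * h ^ 2 / 2 := by
  have hgc : Continuous g := by
    have : LipschitzWith S.toNNReal g := by
      apply LipschitzWith.of_dist_le_mul
      intro a b
      rw [Real.dist_eq, Real.dist_eq, Real.coe_toNNReal S hS0]
      exact hlip a b
    exact this.continuous
  set w : ℝ → ℝ := fun t => f (x + t) - g x * t with hw_def
  have hw : ∀ t, HasDerivAt w (g (x + t) - g x) t := by
    intro t
    have h1 : HasDerivAt (fun t : ℝ => f (x + t)) (g (x + t)) t := by
      have := (hd (x + t)).comp t ((hasDerivAt_id t).const_add x)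
      simpa [Function.comp_def] using this
    have h2 : HasDerivAt (fun t : ℝ => g x * t) (g x) t := by
      simpa using (hasDerivAt_id t).const_mul (g x)
    exact h1.sub h2
  have hvc : Continuous fun t => g (x + t) - g x :=
    ((hgc.comp (continuous_const.add continuous_id)).sub continuous_const)
  have hftc : ∫ t in (0:ℝ)..h, (g (x + t) - g x) = w h - w 0 :=
    intervalIntegral.integral_eq_sub_of_hasDerivAt (fun t _ => hw t)
      (hvc.intervalIntegrable 0 h)
  have hval : f (x + h) - f x - g x * h = ∫ t in (0:ℝ)..h, (g (x + t) - g x) := by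
    rw [hftc]; simp [hw_def]; ring
  rw [hval]
  have hptw : ∀ t : ℝ, |g (x + t) - g x| ≤ S * |t| := by
    intro t
    have := hlip (x + t) x
    simpa using this
  rcases le_total 0 h with hh | hh
  · calc |∫ t in (0:ℝ)..h, (g (x + t) - g x)| ≤ ∫ t in (0:ℝ)..h, |g (x + t) - g x| :=
        intervalIntegral.abs_integral_le_integral_abs hh
      _ ≤ ∫ t in (0:ℝ)..h, S * t := by
          apply intervalIntegral.integral_mono_on hh
            (hvc.abs.intervalIntegrable 0 h)
            ((continuous_const.mul continuous_id).intervalIntegrable 0 h)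
          intro t ht
          refine le_trans (hptw t) ?_
          rw [abs_of_nonneg ht.1]
          exact le_rfl
      _ = S * h ^ 2 / 2 := by
          rw [intervalIntegral.integral_const_mul, integral_id]; ring
  · have hsymm : ∫ t in (0:ℝ)..h, (g (x + t) - g x) = -∫ t in h..(0:ℝ), (g (x + t) - g x) :=
      intervalIntegral.integral_symm h 0
    rw [hsymm, abs_neg]
    calc |∫ t in h..(0:ℝ), (g (x + t) - g x)| ≤ ∫ t in h..(0:ℝ), |g (x + t) - g x| :=
        intervalIntegral.abs_integral_le_integral_abs hh
      _ ≤ ∫ t in h..(0:ℝ), S * (-t) := by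
          apply intervalIntegral.integral_mono_on hh
            (hvc.abs.intervalIntegrable h 0)
            ((continuous_const.mul continuous_id.neg).intervalIntegrable h 0)
          intro t ht
          refine le_trans (hptw t) ?_
          rw [abs_of_nonpos ht.2]
          exact le_rfl
      _ = S * h ^ 2 / 2 := by
          have : ∀ t : ℝ, S * (-t) = (-S) * t := fun t => by ring
          simp_rw [this]
          rw [intervalIntegral.integral_const_mul, integral_id]; ring


lemma psi_mem {u : ℝ} (h0 : 0 ≤ u) (h1 : u ≤ 1) : psi u ∈ Icc (0:ℝ) 1 := by
  constructor
  · unfold psi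
    nlinarith [pow_nonneg h0 3, sq_nonneg (2*u - 5/2), sq_nonneg u]
  · unfold psi
    nlinarith [pow_nonneg (sub_nonneg.mpr h1) 3, sq_nonneg u, sq_nonneg (1 - u),
      mul_nonneg (mul_nonneg h0 h0) (sub_nonneg.mpr h1)]

lemma fn_mem (n : ℕ) (x : ℝ) : fn n x ∈ Icc (0:ℝ) 1 := by
  cases n with
  | zero => exact ⟨zero_le_one, le_rfl⟩
  | succ m =>
    rw [fn_eq]
    exact psi_mem (clamp_mem _).1 (clamp_mem _).2

lemma integrable_comp_abs {f : ℝ → ℝ} (hf : IntegrableOn f (Ioi (0:ℝ))) :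
    Integrable (fun x => f |x|) := by
  have h1 : IntegrableOn (fun x => f |x|) (Ioi (0:ℝ)) :=
    hf.congr_fun (fun x hx => by rw [abs_of_pos (mem_Ioi.mp hx)]) measurableSet_Ioi
  have h2 : IntegrableOn (fun x ↦ f |x|) (Iic (0:ℝ)) := by
    rw [← Measure.map_neg_eq_self (volume : Measure ℝ)]
    have m : MeasurableEmbedding fun x : ℝ => -x := (Homeomorph.neg ℝ).measurableEmbedding
    rw [m.integrableOn_map_iff]
    simp_rw [Function.comp_def, abs_neg, neg_preimage, neg_Iic, neg_zero]
    exact (integrableOn_Ici_iff_integrableOn_Ioi).mpr h1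
  have := h2.union h1
  rwa [Iic_union_Ioi, integrableOn_univ] at this


section GInt
variable {α C : ℝ} (hα1 : 0 < α) (hα2 : α < 2) (hC : 0 ≤ C)

noncomputable def Gp (α C : ℝ) (t : ℝ) : ℝ := (if t ≤ 1 then C * t ^ 2 else 1) / t ^ (1 + α)

include hα1 hα2 hC

lemma Gp_eq1 : EqOn (Gp α C) (fun t => C * t ^ (1 - α)) (Ioc (0:ℝ) 1) := by
  intro t ht
  have ht0 : (0:ℝ) < t := ht.1
  simp only [Gp, if_pos ht.2]
  rw [← Real.rpow_natCast t 2, mul_div_assoc, ← Real.rpow_sub ht0,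
    show ((2:ℕ):ℝ) - (1 + α) = 1 - α by push_cast; ring]

lemma Gp_eq2 : EqOn (Gp α C) (fun t => t ^ (-(1 + α))) (Ioi (1:ℝ)) := by
  intro t ht
  have ht1 : (1:ℝ) < t := ht
  simp only [Gp, if_neg (not_le.mpr ht1)]
  rw [Real.rpow_neg (by linarith)]
  exact one_div _

lemma Gp_int1 : IntegrableOn (Gp α C) (Ioc (0:ℝ) 1) := by
  have h1 : IntegrableOn (fun t : ℝ => t ^ (1 - α)) (Ioc (0:ℝ) 1) :=
    (intervalIntegrable_iff_integrableOn_Ioc_of_le zero_le_one).mp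
      (intervalIntegral.intervalIntegrable_rpow' (by linarith))
  have h2 : IntegrableOn (fun t : ℝ => C * t ^ (1 - α)) (Ioc (0:ℝ) 1) := h1.const_mul C
  exact h2.congr_fun (fun t ht => (Gp_eq1 hα1 hα2 hC ht).symm) measurableSet_Ioc

lemma Gp_int2 : IntegrableOn (Gp α C) (Ioi (1:ℝ)) := by
  have h1 : IntegrableOn (fun t : ℝ => t ^ (-(1 + α))) (Ioi (1:ℝ)) :=
    integrableOn_Ioi_rpow_of_lt (by linarith) zero_lt_one
  exact h1.congr_fun (fun t ht => (Gp_eq2 hα1 hα2 hC ht).symm) measurableSet_Ioi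

lemma Gp_int : IntegrableOn (Gp α C) (Ioi (0:ℝ)) := by
  have := (Gp_int1 hα1 hα2 hC).union (Gp_int2 hα1 hα2 hC)
  rwa [Ioc_union_Ioi_eq_Ioi zero_le_one] at this

lemma Gp_integral : ∫ t in Ioi (0:ℝ), Gp α C t = C * (1 / (2 - α)) + 1 / α := by
  rw [← Ioc_union_Ioi_eq_Ioi (zero_le_one (α := ℝ)),
    setIntegral_union Ioc_disjoint_Ioi_same measurableSet_Ioi
      (Gp_int1 hα1 hα2 hC) (Gp_int2 hα1 hα2 hC)]
  have e1 : ∫ t in Ioc (0:ℝ) 1, Gp α C t = C * (1 / (2 - α)) := by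
    rw [setIntegral_congr_fun measurableSet_Ioc (Gp_eq1 hα1 hα2 hC)]
    rw [← intervalIntegral.integral_of_le zero_le_one]
    rw [intervalIntegral.integral_const_mul, integral_rpow (Or.inl (by linarith)),
      show (1:ℝ) - α + 1 = 2 - α by ring, Real.one_rpow,
      Real.zero_rpow (ne_of_gt (by linarith))]
    norm_num
  have e2 : ∫ t in Ioi (1:ℝ), Gp α C t = 1 / α := by
    rw [setIntegral_congr_fun measurableSet_Ioi (Gp_eq2 hα1 hα2 hC)]
    rw [integral_Ioi_rpow_of_lt (by linarith) zero_lt_one]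
    rw [Real.one_rpow]
    field_simp
    rw [show -(1 + α) + 1 = -α by ring, div_neg, neg_neg, div_self (ne_of_gt hα1)]
  rw [e1, e2]

end GInt
end S8


open Set in
theorem stmt8 (α : ℝ) (hα1 : 0 < α) (hα2 : α < 2) :
    ∀ n : ℕ, 1 ≤ n → ∀ x : ℝ,
      |Dalpha α (fn n) x| ≤
        (⨆ u : Set.Icc (0 : ℝ) 1, |deriv (deriv psi) (u : ℝ)|) / (2 - α) + 2 / α := by
  intro n hn x
  obtain ⟨m, rfl⟩ : ∃ m, n = m + 1 := ⟨n - 1, (Nat.succ_pred_eq_of_pos hn).symm⟩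
  set S : ℝ := ⨆ u : Set.Icc (0:ℝ) 1, |deriv (deriv psi) (u:ℝ)| with hSdef
  have hbdd : BddAbove (Set.range fun u : Set.Icc (0:ℝ) 1 => |deriv (deriv psi) (u:ℝ)|) := by
    refine ⟨360, ?_⟩
    rintro y ⟨u, rfl⟩
    show |deriv (deriv psi) (u:ℝ)| ≤ 360
    rw [S8.deriv_deriv_psi]
    have h0 := u.2.1
    have h1 := u.2.2
    rw [abs_le]
    constructor <;> unfold S8.ddpsi <;> nlinarith [sq_nonneg ((u:ℝ) - 1), sq_nonneg (u:ℝ)]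
  have hS : ∀ u ∈ Set.Icc (0:ℝ) 1, |S8.ddpsi u| ≤ S := by
    intro u hu
    rw [← S8.deriv_deriv_psi]
    exact le_ciSup hbdd ⟨u, hu⟩
  have hS0 : 0 ≤ S := S8.S_nonneg hS
  have hderiv : deriv (fn (m+1)) x = S8.gder m x := (S8.hasDerivAt_fn hS m x).deriv
  have h2α : (0:ℝ) < 2 - α := by linarith
  have hpt : ∀ h : ℝ,
      ‖(fn (m+1) (x+h) - fn (m+1) x -
        (if |h| ≤ 1 then deriv (fn (m+1)) x * h else 0)) / |h| ^ (1+α)‖ ≤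
        S8.Gp α (S/2) |h| := by
    intro h
    rw [Real.norm_eq_abs, abs_div, abs_of_nonneg (Real.rpow_nonneg (abs_nonneg h) _)]
    unfold S8.Gp
    rcases eq_or_ne h 0 with rfl | hne
    · rw [abs_zero, Real.zero_rpow (ne_of_gt (by linarith)), div_zero, div_zero]
    · have hpos : (0:ℝ) < |h| ^ (1+α) :=
        Real.rpow_pos_of_pos (abs_pos.mpr hne) _
      rw [div_le_div_iff_of_pos_right hpos]
      by_cases hle : |h| ≤ 1
      · rw [if_pos hle, if_pos hle, hderiv]
        have := S8.taylor hS0 (fun y => S8.hasDerivAt_fn hS m y) (S8.gder_lip hS m) x h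
        calc |fn (m+1) (x+h) - fn (m+1) x - S8.gder m x * h| ≤ S * h ^ 2 / 2 := this
          _ = S / 2 * |h| ^ 2 := by rw [sq_abs]; ring
      · rw [if_neg hle, if_neg hle, sub_zero]
        have h1 := S8.fn_mem (m+1) (x+h)
        have h2 := S8.fn_mem (m+1) x
        rw [abs_le]
        constructor <;> [linarith [h1.1, h2.2]; linarith [h1.2, h2.1]]
  calc |Dalpha α (fn (m+1)) x|
      ≤ ∫ h : ℝ, ‖(fn (m+1) (x+h) - fn (m+1) x -
          (if |h| ≤ 1 then deriv (fn (m+1)) x * h else 0)) / |h| ^ (1+α)‖ := by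
        rw [← Real.norm_eq_abs]
        exact norm_integral_le_integral_norm _
    _ ≤ ∫ h : ℝ, S8.Gp α (S/2) |h| := by
        refine integral_mono_of_nonneg (ae_of_all _ fun h => norm_nonneg _) ?_ (ae_of_all _ hpt)
        exact S8.integrable_comp_abs (S8.Gp_int hα1 hα2 (by linarith))
    _ = 2 * ∫ t in Set.Ioi (0:ℝ), S8.Gp α (S/2) t := integral_comp_abs
    _ = S / (2 - α) + 2 / α := by
        rw [S8.Gp_integral hα1 hα2 (by linarith)]
        field_simp
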